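/- Let ≺ be a left-invariant total order on B_3 whose positive cone is exactly the union of the set of σ1-positive elements and the set {σ2^k : k ≥ 1}. Then ≺ is approximated by its conjugates: for every finite subset S ⊆ B_3 there exists an integer j ≥ 1 such that the conjugate order ≺_h with h = σ2^{-j}σ1 agrees with ≺ on S × S, yet ≺_h ≠ ≺. -/

import Mathlib

/-- The single braid relation of `B₃`: σ₁σ₂σ₁ = σ₂σ₁σ₂. -/
def braidRels3 : Set (FreeGroup (Fin 2)) :=
  { FreeGroup.of 0 * FreeGroup.of 1 * FreeGroup.of 0 *
      (FreeGroup.of 1 * FreeGroup.of 0 * FreeGroup.of 1)⁻¹ }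

/-- The braid group `B₃ = ⟨σ₁, σ₂ | σ₁σ₂σ₁ = σ₂σ₁σ₂⟩`. -/
abbrev B₃ : Type := PresentedGroup braidRels3

def σ₁ : B₃ := PresentedGroup.of 0
def σ₂ : B₃ := PresentedGroup.of 1

/-- A left-invariant total order (left order) on a group `G`. -/
def IsLeftOrder {G : Type*} [Group G] (r : G → G → Prop) : Prop :=
  IsStrictTotalOrder G r ∧ ∀ h f g : G, r f g → r (h * f) (h * g)

/-- The group element represented by a single letter `σᵢ^{±1}`
(`true` = positive letter, `false` = inverse letter). -/
def letterB₃ (x : Fin 2 × Bool) : B₃ :=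
  if x.2 then PresentedGroup.of x.1 else (PresentedGroup.of x.1)⁻¹

/-- An element of `B₃` is σ₁-positive if it is represented by some word in
`σ₁^{±1}, σ₂^{±1}` containing at least one `σ₁` and no `σ₁⁻¹`. -/
def IsSigmaOnePositive (β : B₃) : Prop :=
  ∃ w : List (Fin 2 × Bool),
    (w.map letterB₃).prod = β ∧ ((0 : Fin 2), true) ∈ w ∧ ((0 : Fin 2), false) ∉ w

/-- The conjugate of the order `r` by the group element `h`:
`f ≺_h g` iff `h⁻¹fh ≺ h⁻¹gh`. -/
def conjOrder {G : Type*} [Group G] (r : G → G → Prop) (h : G) : G → G → Prop :=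
  fun f g => r (h⁻¹ * f * h) (h⁻¹ * g * h)

namespace Stmt11Aux

lemma braid : σ₁ * σ₂ * σ₁ = σ₂ * σ₁ * σ₂ := by
  have h1 : (PresentedGroup.mk braidRels3) (FreeGroup.of 0 * FreeGroup.of 1 * FreeGroup.of 0 *
      (FreeGroup.of 1 * FreeGroup.of 0 * FreeGroup.of 1)⁻¹) = 1 := by
    exact PresentedGroup.one_of_mem rfl
  simp only [map_mul, map_inv] at h1
  have h2 : σ₁ * σ₂ * σ₁ * (σ₂ * σ₁ * σ₂)⁻¹ = 1 := by
    simpa [σ₁, σ₂, PresentedGroup.of, mul_assoc] using h1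
  rw [mul_inv_eq_one] at h2
  exact h2

lemma conjz (m : ℤ) : σ₁⁻¹ * σ₂ ^ m * σ₁ = σ₂ * σ₁ ^ m * σ₂⁻¹ := by
  have h1 : σ₁⁻¹ * σ₂ * σ₁ = σ₂ * σ₁ * σ₂⁻¹ :=
    calc σ₁⁻¹ * σ₂ * σ₁ = σ₁⁻¹ * (σ₂ * σ₁ * σ₂) * σ₂⁻¹ := by group
    _ = σ₁⁻¹ * (σ₁ * σ₂ * σ₁) * σ₂⁻¹ := by rw [braid]
    _ = σ₂ * σ₁ * σ₂⁻¹ := by group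
  calc σ₁⁻¹ * σ₂ ^ m * σ₁ = (σ₁⁻¹ * σ₂ * σ₁) ^ m := by
        rw [show σ₁⁻¹ * σ₂ * σ₁ = (MulAut.conj σ₁⁻¹) σ₂ by simp [MulAut.conj_apply]]
        rw [← map_zpow]; simp [MulAut.conj_apply]
    _ = (σ₂ * σ₁ * σ₂⁻¹) ^ m := by rw [h1]
    _ = σ₂ * σ₁ ^ m * σ₂⁻¹ := by
        rw [show σ₂ * σ₁ * σ₂⁻¹ = (MulAut.conj σ₂) σ₁ by simp [MulAut.conj_apply]]
        rw [← map_zpow]; simp [MulAut.conj_apply]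

lemma letter01 : letterB₃ ((0 : Fin 2), true) = σ₁ := rfl
lemma letter00 : letterB₃ ((0 : Fin 2), false) = σ₁⁻¹ := rfl
lemma letter11 : letterB₃ ((1 : Fin 2), true) = σ₂ := rfl
lemma letter10 : letterB₃ ((1 : Fin 2), false) = σ₂⁻¹ := rfl

/-- representable by a word with no `σ₁⁻¹`. -/
def NNRep (β : B₃) : Prop :=
  ∃ w : List (Fin 2 × Bool), (w.map letterB₃).prod = β ∧ ((0 : Fin 2), false) ∉ w

lemma nn_mul {a b : B₃} (ha : NNRep a) (hb : NNRep b) : NNRep (a * b) := by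
  obtain ⟨u, hu, hu2⟩ := ha; obtain ⟨v, hv, hv2⟩ := hb
  exact ⟨u ++ v, by simp [hu, hv], by simp [hu2, hv2]⟩

lemma nn_one : NNRep 1 := ⟨[], by simp, by simp⟩

lemma nn_sigma1 : NNRep σ₁ := ⟨[((0 : Fin 2), true)], by simp [letter01], by simp⟩

lemma nn_sigma2 : NNRep σ₂ := ⟨[((1 : Fin 2), true)], by simp [letter11], by simp⟩

lemma nn_sigma2_inv : NNRep σ₂⁻¹ := ⟨[((1 : Fin 2), false)], by simp [letter10], by simp⟩

lemma nn_sigma2_zpow (m : ℤ) : NNRep (σ₂ ^ m) := by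
  rcases le_or_gt 0 m with h | h
  · refine ⟨List.replicate m.toNat ((1 : Fin 2), true), ?_, by simp [List.mem_replicate]⟩
    simp [letter11, ← zpow_natCast, Int.toNat_of_nonneg h]
  · refine ⟨List.replicate (-m).toNat ((1 : Fin 2), false), ?_, by simp [List.mem_replicate]⟩
    simp [letter10, ← zpow_natCast, Int.toNat_of_nonneg (by omega : (0:ℤ) ≤ -m)]

lemma pos_parts {x y z : B₃} (hx : NNRep x) (hy : IsSigmaOnePositive y) (hz : NNRep z) :
    IsSigmaOnePositive (x * y * z) := by
  obtain ⟨u, hu, hu2⟩ := hx; obtain ⟨v, hv, hv1, hv2⟩ := hy; obtain ⟨w, hw, hw2⟩ := hz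
  exact ⟨u ++ v ++ w, by simp [hu, hv, hw, mul_assoc], by simp [hv1], by simp [hu2, hv2, hw2]⟩

lemma pos_sigma1 : IsSigmaOnePositive σ₁ :=
  ⟨[((0 : Fin 2), true)], by simp [letter01], by simp, by simp⟩

lemma pos_sigma1_pow {n : ℕ} (hn : 1 ≤ n) : IsSigmaOnePositive (σ₁ ^ n) := by
  refine ⟨List.replicate n ((0 : Fin 2), true), by simp [letter01], ?_,
    by simp [List.mem_replicate]⟩
  simp only [List.mem_replicate]
  exact ⟨by omega, trivial⟩

lemma decomp : ∀ w : List (Fin 2 × Bool), ((0 : Fin 2), false) ∉ w →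
    (∃ m : ℤ, (w.map letterB₃).prod = σ₂ ^ m) ∨
    (∃ (a : ℤ) (c : B₃), (w.map letterB₃).prod = σ₂ ^ a * σ₁ * c ∧ NNRep c) := by
  intro w
  induction w with
  | nil => intro _; exact Or.inl ⟨0, by simp⟩
  | cons x tl ih =>
    intro hx
    have htl : ((0 : Fin 2), false) ∉ tl := fun h => hx (List.mem_cons_of_mem _ h)
    have hxh : x ≠ ((0 : Fin 2), false) := fun h => hx (h ▸ List.mem_cons_self)
    obtain ⟨i, b⟩ := x
    have hi : i = 0 ∨ i = 1 := by omega
    rcases hi with hi | hi <;> subst hi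
    · cases b
      · exact absurd rfl hxh
      · refine Or.inr ⟨0, (tl.map letterB₃).prod, ?_, ⟨tl, rfl, htl⟩⟩
        simp [letter01]
    · have he : letterB₃ ((1 : Fin 2), b) = σ₂ ^ (if b then (1:ℤ) else -1) := by
        cases b <;> simp [letter11, letter10]
      rcases ih htl with ⟨m, hm⟩ | ⟨a, c, hc, hcnn⟩
      · refine Or.inl ⟨(if b then (1:ℤ) else -1) + m, ?_⟩
        rw [List.map_cons, List.prod_cons, he, hm, ← zpow_add]
      · refine Or.inr ⟨(if b then (1:ℤ) else -1) + a, c, ?_, hcnn⟩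
        rw [List.map_cons, List.prod_cons, he, hc, ← mul_assoc, ← mul_assoc, ← zpow_add]

lemma conj_sigma2_pow {m : ℤ} (hm : 1 ≤ m) (j : ℤ) :
    IsSigmaOnePositive ((σ₂ ^ (-j) * σ₁)⁻¹ * σ₂ ^ m * (σ₂ ^ (-j) * σ₁)) := by
  have key : (σ₂ ^ (-j) * σ₁)⁻¹ * σ₂ ^ m * (σ₂ ^ (-j) * σ₁) = σ₂ * σ₁ ^ m.toNat * σ₂⁻¹ :=
    calc (σ₂ ^ (-j) * σ₁)⁻¹ * σ₂ ^ m * (σ₂ ^ (-j) * σ₁) = σ₁⁻¹ * σ₂ ^ m * σ₁ := by group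
    _ = σ₂ * σ₁ ^ m * σ₂⁻¹ := conjz m
    _ = σ₂ * σ₁ ^ m.toNat * σ₂⁻¹ := by
        rw [← zpow_natCast σ₁ m.toNat, Int.toNat_of_nonneg (by omega)]
  rw [key]
  exact pos_parts nn_sigma2 (pos_sigma1_pow (by omega)) nn_sigma2_inv

lemma conj_pos_of_pos {g : B₃} (hg : IsSigmaOnePositive g) :
    (∃ m : ℤ, m ≤ 0 ∧ g = σ₂ ^ m) ∨
    ∃ N : ℤ, ∀ j : ℤ, N ≤ j →
      IsSigmaOnePositive ((σ₂ ^ (-j) * σ₁)⁻¹ * g * (σ₂ ^ (-j) * σ₁)) := by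
  obtain ⟨w, hw, -, hw2⟩ := hg
  rcases decomp w hw2 with ⟨m, hm⟩ | ⟨a, c, hc, hcnn⟩
  · rcases le_or_gt m 0 with h | h
    · exact Or.inl ⟨m, h, by rw [← hw, hm]⟩
    · exact Or.inr ⟨1, fun j _ => by rw [← hw, hm]; exact conj_sigma2_pow (by omega) j⟩
  · refine Or.inr ⟨1 - a, fun j hj => ?_⟩
    have key : (σ₂ ^ (-j) * σ₁)⁻¹ * g * (σ₂ ^ (-j) * σ₁)
        = σ₂ * σ₁ ^ (j + a).toNat * (σ₂⁻¹ * (c * (σ₂ ^ (-j) * σ₁))) := by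
      rw [← hw, hc]
      calc (σ₂ ^ (-j) * σ₁)⁻¹ * (σ₂ ^ a * σ₁ * c) * (σ₂ ^ (-j) * σ₁)
          = (σ₁⁻¹ * σ₂ ^ (j + a) * σ₁) * (c * (σ₂ ^ (-j) * σ₁)) := by group
      _ = (σ₂ * σ₁ ^ (j + a) * σ₂⁻¹) * (c * (σ₂ ^ (-j) * σ₁)) := by rw [conjz]
      _ = σ₂ * σ₁ ^ (j + a).toNat * (σ₂⁻¹ * (c * (σ₂ ^ (-j) * σ₁))) := by
          rw [← zpow_natCast σ₁ (j + a).toNat, Int.toNat_of_nonneg (by omega)]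
          group
    rw [key]
    exact pos_parts nn_sigma2 (pos_sigma1_pow (by omega))
      (nn_mul nn_sigma2_inv (nn_mul hcnn (nn_mul (nn_sigma2_zpow (-j)) nn_sigma1)))

lemma pos_g0 (t : ℤ) : IsSigmaOnePositive (σ₂ ^ t * σ₁) := by
  simpa using pos_parts (nn_sigma2_zpow t) pos_sigma1 nn_one

lemma pos_conj_g0_inv {j : ℤ} (hj : 1 ≤ j) :
    IsSigmaOnePositive (((σ₂ ^ (-j) * σ₁)⁻¹ * (σ₂ ^ (-(j+1)) * σ₁) * (σ₂ ^ (-j) * σ₁))⁻¹) := by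
  have key : ((σ₂ ^ (-j) * σ₁)⁻¹ * (σ₂ ^ (-(j+1)) * σ₁) * (σ₂ ^ (-j) * σ₁))⁻¹
      = σ₂ * σ₁ ^ (j + 1).toNat * (σ₂⁻¹ * σ₂⁻¹) :=
    calc ((σ₂ ^ (-j) * σ₁)⁻¹ * (σ₂ ^ (-(j+1)) * σ₁) * (σ₂ ^ (-j) * σ₁))⁻¹
        = σ₁⁻¹ * σ₂ ^ j * (σ₁⁻¹ * σ₂ ^ (1:ℤ) * σ₁) := by group
    _ = σ₁⁻¹ * σ₂ ^ j * (σ₂ * σ₁ ^ (1:ℤ) * σ₂⁻¹) := by rw [conjz]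
    _ = (σ₁⁻¹ * σ₂ ^ (j + 1) * σ₁) * σ₂⁻¹ := by group
    _ = (σ₂ * σ₁ ^ (j + 1) * σ₂⁻¹) * σ₂⁻¹ := by rw [conjz]
    _ = σ₂ * σ₁ ^ (j + 1).toNat * (σ₂⁻¹ * σ₂⁻¹) := by
        rw [← zpow_natCast σ₁ (j + 1).toNat, Int.toNat_of_nonneg (by omega)]
        group
  rw [key]
  exact pos_parts nn_sigma2 (pos_sigma1_pow (by omega)) (nn_mul nn_sigma2_inv nn_sigma2_inv)

end Stmt11Aux

open Stmt11Aux

/-- A left order on `B₃` whose positive cone consists exactly of the σ₁-positive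
elements together with the positive powers of σ₂ (i.e. the Dehornoy ordering) is
approximated by its conjugates by the elements `σ₂⁻ʲσ₁`. -/
theorem stmt_11 (r : B₃ → B₃ → Prop) (hr : IsLeftOrder r)
    (hcone : {β : B₃ | r 1 β} =
      {β : B₃ | IsSigmaOnePositive β} ∪ {β : B₃ | ∃ k : ℕ, 1 ≤ k ∧ β = σ₂ ^ k}) :
    ∀ S : Finset B₃, ∃ j : ℤ, 1 ≤ j ∧
      (∀ a ∈ S, ∀ b ∈ S, (conjOrder r (σ₂ ^ (-j) * σ₁) a b ↔ r a b)) ∧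
      conjOrder r (σ₂ ^ (-j) * σ₁) ≠ r := by
  classical
  obtain ⟨hsto, hli⟩ := hr
  haveI := hsto
  have hmem : ∀ β : B₃, r 1 β ↔
      (IsSigmaOnePositive β ∨ ∃ k : ℕ, 1 ≤ k ∧ β = σ₂ ^ k) := by
    intro β
    have := Set.ext_iff.mp hcone β
    simpa using this
  have no_both : ∀ x : B₃, r 1 x → r 1 x⁻¹ → False := by
    intro x h1 h2
    have h3 : r x 1 := by
      have := hli x _ _ h2
      simpa using this
    exact irrefl_of r 1 (trans_of r h1 h3)
  have key : ∀ g : B₃, r 1 g → ∃ N : ℤ, ∀ j : ℤ, N ≤ j →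
      r 1 ((σ₂ ^ (-j) * σ₁)⁻¹ * g * (σ₂ ^ (-j) * σ₁)) := by
    intro g hg
    rcases (hmem g).mp hg with hpos | ⟨k, hk, rfl⟩
    · rcases conj_pos_of_pos hpos with ⟨m, hm, rfl⟩ | ⟨N, hN⟩
      · exfalso
        rcases eq_or_lt_of_le hm with hm0 | hm0
        · rw [hm0] at hg
          exact irrefl_of r 1 (by simpa using hg)
        · refine no_both _ hg ((hmem _).mpr (Or.inr ⟨(-m).toNat, by omega, ?_⟩))
          rw [← zpow_natCast σ₂ (-m).toNat, Int.toNat_of_nonneg (by omega), ← zpow_neg]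
      · exact ⟨N, fun j hj => (hmem _).mpr (Or.inl (hN j hj))⟩
    · refine ⟨1, fun j _ => (hmem _).mpr (Or.inl ?_)⟩
      rw [← zpow_natCast σ₂ k]
      exact conj_sigma2_pow (by omega) j
  have key' : ∀ g : B₃, ∃ N : ℤ, r 1 g → ∀ j : ℤ, N ≤ j →
      r 1 ((σ₂ ^ (-j) * σ₁)⁻¹ * g * (σ₂ ^ (-j) * σ₁)) := by
    intro g
    by_cases h : r 1 g
    · obtain ⟨N, hN⟩ := key g h
      exact ⟨N, fun _ => hN⟩
    · exact ⟨1, fun hg => absurd hg h⟩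
  choose f hf using key'
  intro S
  set T : Finset B₃ := Finset.image (fun p : B₃ × B₃ => p.1⁻¹ * p.2) (S ×ˢ S) with hT
  refine ⟨max 1 ((T.sup fun g => (f g).toNat : ℕ) : ℤ), le_max_left _ _, ?_, ?_⟩
  · set j : ℤ := max 1 ((T.sup fun g => (f g).toNat : ℕ) : ℤ) with hjdef
    set h : B₃ := σ₂ ^ (-j) * σ₁ with hhdef
    have hbound : ∀ g ∈ T, f g ≤ j := by
      intro g hg
      calc f g ≤ ((f g).toNat : ℤ) := Int.self_le_toNat _
      _ ≤ ((T.sup fun g => (f g).toNat : ℕ) : ℤ) := by exact_mod_cast Finset.le_sup (f := fun g => (f g).toNat) hg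
      _ ≤ j := le_max_right _ _
    have main : ∀ a ∈ S, ∀ b ∈ S, r a b → conjOrder r h a b := by
      intro a ha b hb hab
      have hg : r 1 (a⁻¹ * b) := by
        have := hli a⁻¹ _ _ hab
        simpa using this
      have hmemT : a⁻¹ * b ∈ T :=
        Finset.mem_image.mpr ⟨(a, b), Finset.mem_product.mpr ⟨ha, hb⟩, rfl⟩
      have hp := hf _ hg j (hbound _ hmemT)
      have := hli (h⁻¹ * a * h) _ _ hp
      show r (h⁻¹ * a * h) (h⁻¹ * b * h)
      have heq : (h⁻¹ * a * h) * ((σ₂ ^ (-j) * σ₁)⁻¹ * (a⁻¹ * b) * (σ₂ ^ (-j) * σ₁))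
          = h⁻¹ * b * h := by rw [hhdef]; group
      rw [mul_one] at this
      rw [← heq]
      exact this
    intro a ha b hb
    constructor
    · intro hco
      rcases trichotomous_of r a b with hab | rfl | hba
      · exact hab
      · exact absurd hco (irrefl_of r _)
      · exact absurd (trans_of r hco (main b hb a ha hba)) (irrefl_of r _)
    · exact main a ha b hb
  · set j : ℤ := max 1 ((T.sup fun g => (f g).toNat : ℕ) : ℤ) with hjdef
    have hj1 : (1:ℤ) ≤ j := le_max_left _ _
    intro heq
    set h : B₃ := σ₂ ^ (-j) * σ₁ with hhdef
    have h1 : r 1 (σ₂ ^ (-(j+1)) * σ₁) := (hmem _).mpr (Or.inl (pos_g0 _))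
    have h2 : conjOrder r h 1 (σ₂ ^ (-(j+1)) * σ₁) := by
      rw [heq]; exact h1
    have h2' : r 1 (h⁻¹ * (σ₂ ^ (-(j+1)) * σ₁) * h) := by
      have : h⁻¹ * 1 * h = 1 := by group
      simpa [conjOrder, this] using h2
    have h3 : r 1 (h⁻¹ * (σ₂ ^ (-(j+1)) * σ₁) * h)⁻¹ :=
      (hmem _).mpr (Or.inl (pos_conj_g0_inv hj1))
    exact no_both _ h2' h3
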